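/- For any sequence of Hilbert–Schmidt operators B_t and α ∈ (0,1], with Σ_t = λI + ∑_{τ<t} B_τ†B_τ on a finite-dimensional Hilbert space, ∑_{t=0}^{T−1} min{max{‖B_t Σ_t^{−1/2}‖^4, ‖B_t Σ_t^{−1/2}‖^{2α}}, 1} ≤ 2 T^{1−α} [1 + log(det(Σ_T)/det(Σ_0))]. -/

import Mathlib

open scoped RealInnerProductSpace

lemma helper_min_log {x : ℝ} (hx : 0 ≤ x) : min x 1 ≤ 2 * Real.log (1 + x) := by
  rcases le_total x 1 with h | h
  · rw [min_eq_left h]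
    have h1 : Real.log (1 + x)⁻¹ ≤ (1 + x)⁻¹ - 1 :=
      Real.log_le_sub_one_of_pos (by positivity)
    rw [Real.log_inv] at h1
    have h2 : 1 - (1+x)⁻¹ ≤ Real.log (1 + x) := by linarith
    have h3 : 1 - (1+x)⁻¹ = x / (1+x) := by
      field_simp
      ring
    have h4 : x / 2 ≤ x / (1 + x) := by
      apply div_le_div_of_nonneg_left hx (by positivity) (by linarith)
    linarith [h3 ▸ h4, h2]
  · rw [min_eq_right h]
    have : Real.log 2 ≤ Real.log (1 + x) := by
      apply Real.log_le_log (by norm_num) (by linarith)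
    nlinarith [Real.log_two_gt_d9]

lemma helper_rpow_le {s α : ℝ} (hs : 0 ≤ s) (h0 : 0 < α) (h1 : α ≤ 1) :
    s ^ α ≤ 1 + s := by
  rcases le_total s 1 with h | h
  · have := Real.rpow_le_one hs h h0.le
    linarith
  · have : s ^ α ≤ s ^ (1:ℝ) := Real.rpow_le_rpow_of_exponent_le h h1
    rw [Real.rpow_one] at this
    linarith

lemma helper_holder {T : ℕ} (z : ℕ → ℝ) (hz : ∀ t, 0 ≤ z t) {α : ℝ}
    (h0 : 0 < α) (h1 : α ≤ 1) :
    ∑ t ∈ Finset.range T, (z t) ^ α ≤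
      (T : ℝ) ^ (1 - α) * (∑ t ∈ Finset.range T, z t) ^ α := by
  rcases Nat.eq_zero_or_pos T with rfl | hT
  · simp
    positivity
  have hTpos : (0:ℝ) < T := by exact_mod_cast hT
  have key := Real.arith_mean_le_rpow_mean (Finset.range T)
    (fun _ => 1 / (T:ℝ)) (fun t => (z t) ^ α)
    (fun i _ => by positivity)
    (by simp [Finset.sum_const]; field_simp)
    (fun i _ => Real.rpow_nonneg (hz i) α)
    (p := 1/α) (by rw [le_div_iff₀ h0]; linarith)
  have hzz : ∀ t, ((z t) ^ α) ^ (1/α : ℝ) = z t := by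
    intro t
    rw [← Real.rpow_mul (hz t), mul_one_div_cancel h0.ne', Real.rpow_one]
  simp only [hzz] at key
  rw [one_div_one_div] at key
  rw [← Finset.mul_sum, ← Finset.mul_sum] at key
  have h2 : ((1/(T:ℝ)) * ∑ t ∈ Finset.range T, z t) ^ α
      = (1/(T:ℝ))^α * (∑ t ∈ Finset.range T, z t) ^ α := by
    apply Real.mul_rpow (by positivity) (Finset.sum_nonneg fun i _ => hz i)
  rw [h2] at key
  have h3 : (T:ℝ) ^ (1-α) = T * (1/(T:ℝ))^α := by
    rw [Real.rpow_sub hTpos, Real.rpow_one, div_eq_mul_inv, one_div,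
      Real.inv_rpow hTpos.le]
  rw [h3, mul_assoc]
  calc ∑ t ∈ Finset.range T, z t ^ α
      = T * ((1/(T:ℝ)) * ∑ t ∈ Finset.range T, z t ^ α) := by
        field_simp
    _ ≤ T * ((1/(T:ℝ))^α * (∑ t ∈ Finset.range T, z t)^α) := by
        apply mul_le_mul_of_nonneg_left key hTpos.le

lemma helper_det {d : ℕ}
    (M : EuclideanSpace ℝ (Fin d) →L[ℝ] EuclideanSpace ℝ (Fin d))
    (hsa : IsSelfAdjoint M) (hpsd : ∀ x, 0 ≤ ⟪M x, x⟫) :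
    1 + ‖M‖ ≤ LinearMap.det
      ((1 + M : EuclideanSpace ℝ (Fin d) →L[ℝ] EuclideanSpace ℝ (Fin d)) :
        EuclideanSpace ℝ (Fin d) →ₗ[ℝ] EuclideanSpace ℝ (Fin d)) := by
  rcases Nat.eq_zero_or_pos d with rfl | hd
  · have hM : ‖M‖ = 0 := by
      apply le_antisymm _ (norm_nonneg M)
      apply ContinuousLinearMap.opNorm_le_bound M le_rfl
      intro x
      rw [Subsingleton.elim (M x) 0]
      simp
    rw [hM, LinearMap.det_eq_one_of_finrank_eq_zero (by rw [finrank_euclideanSpace_fin])]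
    norm_num
  haveI : Nonempty (Fin d) := ⟨⟨0, hd⟩⟩
  have hn : Module.finrank ℝ (EuclideanSpace ℝ (Fin d)) = d := finrank_euclideanSpace_fin
  have hT : (M : EuclideanSpace ℝ (Fin d) →ₗ[ℝ] EuclideanSpace ℝ (Fin d)).IsSymmetric :=
    ContinuousLinearMap.isSelfAdjoint_iff_isSymmetric.mp hsa
  set b := hT.eigenvectorBasis hn with hb
  set μ := hT.eigenvalues hn with hμdef
  have hμ : ∀ i, 0 ≤ μ i := by
    intro i
    have h1 : M (b i) = (μ i : ℝ) • b i := hT.apply_eigenvectorBasis hn i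
    have h2 := hpsd (b i)
    rw [h1, real_inner_smul_left, real_inner_self_eq_norm_sq,
      b.orthonormal.1 i] at h2
    simpa using h2
  have hdet : LinearMap.det
      ((1 + M : EuclideanSpace ℝ (Fin d) →L[ℝ] EuclideanSpace ℝ (Fin d)) :
        EuclideanSpace ℝ (Fin d) →ₗ[ℝ] EuclideanSpace ℝ (Fin d))
      = ∏ i, (1 + μ i) := by
    rw [← LinearMap.det_toMatrix b.toBasis, ← Matrix.det_diagonal]
    congr 1
    ext i j
    rw [LinearMap.toMatrix_apply]
    have h1 : ((1 + M : EuclideanSpace ℝ (Fin d) →L[ℝ] EuclideanSpace ℝ (Fin d)) :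
        EuclideanSpace ℝ (Fin d) →ₗ[ℝ] EuclideanSpace ℝ (Fin d)) (b.toBasis j)
        = (1 + μ j) • b j := by
      have : M (b j) = (μ j : ℝ) • b j := hT.apply_eigenvectorBasis hn j
      simp [OrthonormalBasis.coe_toBasis, this, add_smul]
    rw [h1, map_smul, Finsupp.smul_apply, OrthonormalBasis.coe_toBasis_repr_apply,
      OrthonormalBasis.repr_self]
    rcases eq_or_ne i j with rfl | hij
    · simp [EuclideanSpace.single_apply]
    · simp [EuclideanSpace.single_apply, Matrix.diagonal_apply_ne _ hij, hij, Ne.symm hij]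
  obtain ⟨i₀, -, hi₀⟩ := Finset.exists_max_image Finset.univ μ ⟨Classical.arbitrary _,
    Finset.mem_univ _⟩
  have hi₀' : ∀ i, μ i ≤ μ i₀ := fun i => hi₀ i (Finset.mem_univ i)
  have hnorm : ‖M‖ ≤ μ i₀ := by
    apply ContinuousLinearMap.opNorm_le_bound M (hμ i₀)
    intro x
    have h1 : ‖M x‖ = ‖b.repr (M x)‖ := (b.repr.norm_map (M x)).symm
    have h2 : ‖x‖ = ‖b.repr x‖ := (b.repr.norm_map x).symm
    rw [h1, h2, EuclideanSpace.norm_eq, EuclideanSpace.norm_eq]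
    have h3 : ∀ i, ‖b.repr (M x) i‖^2 ≤ (μ i₀)^2 * ‖b.repr x i‖^2 := by
      intro i
      have := hT.eigenvectorBasis_apply_self_apply hn x i
      rw [← hb, ← hμdef] at this
      rw [show b.repr (M x) i = μ i * b.repr x i from this]
      rw [Real.norm_eq_abs, Real.norm_eq_abs, abs_mul, mul_pow, sq_abs]
      have : (μ i)^2 ≤ (μ i₀)^2 := by nlinarith [hμ i, hi₀' i, hμ i₀]
      nlinarith [sq_abs (b.repr x i), sq_nonneg (b.repr x i), abs_nonneg (b.repr x i)]
    calc Real.sqrt (∑ i, ‖b.repr (M x) i‖^2)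
        ≤ Real.sqrt (∑ i, (μ i₀)^2 * ‖b.repr x i‖^2) := by
          apply Real.sqrt_le_sqrt
          exact Finset.sum_le_sum fun i _ => h3 i
      _ = μ i₀ * Real.sqrt (∑ i, ‖b.repr x i‖^2) := by
          rw [← Finset.mul_sum, Real.sqrt_mul (sq_nonneg _),
            Real.sqrt_sq (hμ i₀)]
  rw [hdet]
  calc 1 + ‖M‖ ≤ 1 + μ i₀ := by linarith
    _ = (1 + μ i₀) * ∏ i ∈ Finset.univ.erase i₀, (1:ℝ) := by simp
    _ ≤ (1 + μ i₀) * ∏ i ∈ Finset.univ.erase i₀, (1 + μ i) := by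
        apply mul_le_mul_of_nonneg_left _ (by linarith [hμ i₀])
        apply Finset.prod_le_prod (fun i _ => by norm_num) (fun i _ => by linarith [hμ i])
    _ = ∏ i, (1 + μ i) := Finset.mul_prod_erase _ (fun i => 1 + μ i) (Finset.mem_univ i₀)

lemma helper_ptwise {x α : ℝ} (hx : 0 ≤ x) (h0 : 0 < α) (h1 : α ≤ 1) :
    min (max (x ^ 2) (x ^ (α : ℝ))) 1 ≤ (min x 1) ^ (α : ℝ) := by
  rcases le_total x 1 with h | h
  · rw [min_eq_left h]
    rcases eq_or_lt_of_le hx with rfl | hx0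
    · simp [Real.zero_rpow h0.ne']
    · have hmax : max (x ^ 2) (x ^ (α : ℝ)) = x ^ (α : ℝ) := by
        apply max_eq_right
        calc x ^ 2 = x ^ (2 : ℝ) := by
              rw [show (2:ℝ) = ((2:ℕ):ℝ) by norm_num, Real.rpow_natCast]
          _ ≤ x ^ (α : ℝ) := Real.rpow_le_rpow_of_exponent_ge hx0 h (by linarith)
      rw [hmax]
      exact min_le_left _ _
  · rw [min_eq_right h, Real.one_rpow]
    exact min_le_right _ _

/-- corollary of the log-determinant bound with max of two powers. -/
theorem stmt9
    {d T : ℕ} (lam : ℝ) (hlam : 0 < lam) (α : ℝ) (hα : α ∈ Set.Ioc (0 : ℝ) 1)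
    (B Sig R : ℕ → (EuclideanSpace ℝ (Fin d) →L[ℝ] EuclideanSpace ℝ (Fin d)))
    (hSig : ∀ t, Sig t =
      lam • 1 + ∑ τ ∈ Finset.range t, (ContinuousLinearMap.adjoint (B τ)).comp (B τ))
    -- R t is the inverse of the positive square root of Sig t
    (hRsa : ∀ t, IsSelfAdjoint (R t))
    (hRpsd : ∀ t, ∀ x : EuclideanSpace ℝ (Fin d), 0 ≤ ⟪R t x, x⟫)
    (hR : ∀ t, (R t).comp ((Sig t).comp (R t)) = 1) :
    ∑ t ∈ Finset.range T,
        min (max (‖(B t).comp (R t)‖ ^ (4 : ℝ)) (‖(B t).comp (R t)‖ ^ (2 * α))) 1 ≤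
      2 * (T : ℝ) ^ (1 - α) *
        (1 + Real.log
          (LinearMap.det (Sig T : EuclideanSpace ℝ (Fin d) →ₗ[ℝ] EuclideanSpace ℝ (Fin d)) /
           LinearMap.det (Sig 0 : EuclideanSpace ℝ (Fin d) →ₗ[ℝ] EuclideanSpace ℝ (Fin d)))) := by
  obtain ⟨hα0, hα1⟩ := hα
  set E := EuclideanSpace ℝ (Fin d) with hE
  set A : ℕ → (E →L[ℝ] E) := fun t => (B t).comp (R t) with hA
  set M : ℕ → (E →L[ℝ] E) := fun t =>
    (ContinuousLinearMap.adjoint (A t)).comp (A t) with hM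
  set x : ℕ → ℝ := fun t => ‖A t‖ ^ 2 with hx
  have hxnn : ∀ t, 0 ≤ x t := fun t => sq_nonneg _
  have hMsa : ∀ t, IsSelfAdjoint (M t) := by
    intro t
    rw [ContinuousLinearMap.isSelfAdjoint_iff', hM]
    simp only [ContinuousLinearMap.adjoint_comp, ContinuousLinearMap.adjoint_adjoint]
  have hMpsd : ∀ t, ∀ v : E, 0 ≤ ⟪M t v, v⟫ := by
    intro t v
    have : ⟪M t v, v⟫ = ⟪A t v, A t v⟫ := by
      rw [hM]
      simp only [ContinuousLinearMap.comp_apply]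
      rw [ContinuousLinearMap.adjoint_inner_left]
    rw [this]
    exact real_inner_self_nonneg
  set D : ℕ → ℝ := fun t => LinearMap.det
    ((1 + M t : E →L[ℝ] E) : E →ₗ[ℝ] E) with hD
  have hDge : ∀ t, 1 + x t ≤ D t := by
    intro t
    have h1 := helper_det (M t) (hMsa t) (hMpsd t)
    have h2 : ‖M t‖ = x t := by
      rw [hM, hx]
      simp only []
      rw [ContinuousLinearMap.norm_adjoint_comp_self, sq]
    rw [h2] at h1
    exact h1
  have hDpos : ∀ t, 0 < D t := fun t => lt_of_lt_of_le (by linarith [hxnn t]) (hDge t)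
  have hRe : ∀ t, (R t).comp ((Sig (t + 1)).comp (R t)) = 1 + M t := by
    intro t
    have hstep : Sig (t + 1) = Sig t + (ContinuousLinearMap.adjoint (B t)).comp (B t) := by
      rw [hSig (t + 1), hSig t, Finset.sum_range_succ, add_assoc]
    have hMt : M t = (R t).comp
        ((((ContinuousLinearMap.adjoint (B t)).comp (B t))).comp (R t)) := by
      ext v
      simp only [hM, hA, ContinuousLinearMap.adjoint_comp,
        ContinuousLinearMap.isSelfAdjoint_iff'.mp (hRsa t), ContinuousLinearMap.comp_apply]
    rw [hstep, ContinuousLinearMap.add_comp, ContinuousLinearMap.comp_add, hR t, hMt]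
  have hdet_step : ∀ t,
      LinearMap.det ((Sig (t+1) : E →L[ℝ] E) : E →ₗ[ℝ] E)
        = LinearMap.det ((Sig t : E →L[ℝ] E) : E →ₗ[ℝ] E) * D t := by
    intro t
    have hc := congrArg (fun f : E →L[ℝ] E => LinearMap.det (f : E →ₗ[ℝ] E)) (hRe t)
    have hc0 := congrArg (fun f : E →L[ℝ] E => LinearMap.det (f : E →ₗ[ℝ] E)) (hR t)
    simp only [ContinuousLinearMap.toLinearMap_comp, LinearMap.det_comp,
      ContinuousLinearMap.one_def, ContinuousLinearMap.coe_id, LinearMap.det_id] at hc hc0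
    set a := LinearMap.det ((R t : E →L[ℝ] E) : E →ₗ[ℝ] E)
    set s := LinearMap.det ((Sig t : E →L[ℝ] E) : E →ₗ[ℝ] E)
    set s' := LinearMap.det ((Sig (t+1) : E →L[ℝ] E) : E →ₗ[ℝ] E)
    have key : s' * (a * (s * a)) = s * (a * (s' * a)) := by ring
    rw [hc0, hc] at key
    simpa [hD, ← Module.End.one_eq_id] using key
  have hprod : ∀ t, LinearMap.det ((Sig t : E →L[ℝ] E) : E →ₗ[ℝ] E)
      = LinearMap.det ((Sig 0 : E →L[ℝ] E) : E →ₗ[ℝ] E) * ∏ τ ∈ Finset.range t, D τ := by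
    intro t
    induction t with
    | zero => simp
    | succ n ih => rw [Finset.prod_range_succ, hdet_step n, ih, mul_assoc]
  have hSig0 : LinearMap.det ((Sig 0 : E →L[ℝ] E) : E →ₗ[ℝ] E) = lam ^ d := by
    rw [hSig 0]
    simp only [Finset.range_zero, Finset.sum_empty, add_zero, ContinuousLinearMap.coe_smul,
      ContinuousLinearMap.one_def, ContinuousLinearMap.coe_id]
    rw [LinearMap.det_smul, LinearMap.det_id, mul_one, finrank_euclideanSpace_fin]
  have hSig0pos : (0:ℝ) < LinearMap.det ((Sig 0 : E →L[ℝ] E) : E →ₗ[ℝ] E) := by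
    rw [hSig0]; positivity
  set L : ℝ := Real.log
    (LinearMap.det ((Sig T : E →L[ℝ] E) : E →ₗ[ℝ] E) /
     LinearMap.det ((Sig 0 : E →L[ℝ] E) : E →ₗ[ℝ] E)) with hL
  have hLeq : L = ∑ t ∈ Finset.range T, Real.log (D t) := by
    rw [hL, hprod T, mul_div_cancel_left₀ _ hSig0pos.ne',
      Real.log_prod (fun t _ => (hDpos t).ne')]
  have hlogD : ∀ t, 0 ≤ Real.log (D t) := fun t =>
    Real.log_nonneg (by linarith [hDge t, hxnn t])
  have hLnn : 0 ≤ L := by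
    rw [hLeq]; exact Finset.sum_nonneg fun t _ => hlogD t
  set S : ℝ := ∑ t ∈ Finset.range T, min (x t) 1 with hS
  have hSnn : 0 ≤ S :=
    Finset.sum_nonneg fun t _ => le_min (hxnn t) zero_le_one
  have hS2L : S ≤ 2 * L := by
    rw [hS, hLeq, Finset.mul_sum]
    apply Finset.sum_le_sum
    intro t _
    calc min (x t) 1 ≤ 2 * Real.log (1 + x t) := helper_min_log (hxnn t)
      _ ≤ 2 * Real.log (D t) := by
          have := Real.log_le_log (by linarith [hxnn t]) (hDge t)
          linarith
  have hpt : ∀ t, min (max (‖A t‖ ^ (4:ℝ)) (‖A t‖ ^ (2*α))) 1 ≤ (min (x t) 1) ^ α := by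
    intro t
    have hy : (0:ℝ) ≤ ‖A t‖ := norm_nonneg _
    have e1 : ‖A t‖ ^ (4:ℝ) = (x t) ^ 2 := by
      rw [hx]
      rw [show (4:ℝ) = ((4:ℕ):ℝ) by norm_num, Real.rpow_natCast]
      ring
    have e2 : ‖A t‖ ^ (2*α) = (x t) ^ α := by
      have hxt : (x t) = ‖A t‖ ^ ((2:ℕ):ℝ) := by rw [Real.rpow_natCast]
      rw [hxt, ← Real.rpow_mul hy]
      congr 1
    rw [e1, e2]
    exact helper_ptwise (hxnn t) hα0 hα1
  calc ∑ t ∈ Finset.range T,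
        min (max (‖(B t).comp (R t)‖ ^ (4 : ℝ)) (‖(B t).comp (R t)‖ ^ (2 * α))) 1
      ≤ ∑ t ∈ Finset.range T, (min (x t) 1) ^ α :=
        Finset.sum_le_sum fun t _ => hpt t
    _ ≤ (T:ℝ)^(1-α) * S^α :=
        helper_holder _ (fun t => le_min (hxnn t) zero_le_one) hα0 hα1
    _ ≤ (T:ℝ)^(1-α) * (1+S) :=
        mul_le_mul_of_nonneg_left (helper_rpow_le hSnn hα0 hα1)
          (Real.rpow_nonneg (Nat.cast_nonneg T) _)
    _ ≤ (T:ℝ)^(1-α) * (2*(1+L)) := by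
        nlinarith [Real.rpow_nonneg (Nat.cast_nonneg T : (0:ℝ) ≤ T) (1-α)]
    _ = 2 * (T:ℝ)^(1-α) * (1+L) := by ring
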